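/- arXiv:0910.4106 — 3 statements merged into one kernel-verified Lean document; each statement's English description precedes it below -/
import Mathlib

section
/- Every metacompact Moore space is monotonically metacompact. -/
open Set TopologicalSpace

def PointFinite {X : Type*} (C : Set (Set X)) : Prop :=
  ∀ x : X, {U ∈ C | x ∈ U}.Finite

def Refines {X : Type*} (A B : Set (Set X)) : Prop :=
  ∀ U ∈ A, ∃ V ∈ B, U ⊆ V

def IsOpenCover' {X : Type*} [TopologicalSpace X] (C : Set (Set X)) : Prop :=
  (∀ U ∈ C, IsOpen U) ∧ ⋃₀ C = Set.univ

def MonotonicallyMetacompact (X : Type*) [TopologicalSpace X] : Prop :=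
  ∃ r : Set (Set X) → Set (Set X),
    (∀ U, IsOpenCover' U →
      IsOpenCover' (r U) ∧ PointFinite (r U) ∧ Refines (r U) U) ∧
    (∀ U V, IsOpenCover' U → IsOpenCover' V → Refines U V → Refines (r U) (r V))

def MonotonicallyCountablyMetacompact (X : Type*) [TopologicalSpace X] : Prop :=
  ∃ r : Set (Set X) → Set (Set X),
    (∀ U, IsOpenCover' U → U.Countable →
      IsOpenCover' (r U) ∧ PointFinite (r U) ∧ Refines (r U) U) ∧
    (∀ U V, IsOpenCover' U → IsOpenCover' V → U.Countable → V.Countable →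
      Refines U V → Refines (r U) (r V))

def IsPerfectSpace (X : Type*) [TopologicalSpace X] : Prop :=
  ∀ C : Set X, IsClosed C → ∃ f : ℕ → Set X, (∀ n, IsOpen (f n)) ∧ C = ⋂ n, f n

def St {X : Type*} (x : X) (C : Set (Set X)) : Set X := ⋃₀ {G ∈ C | x ∈ G}

def IsDevelopment {X : Type*} [TopologicalSpace X] (G : ℕ → Set (Set X)) : Prop :=
  (∀ n, IsOpenCover' (G n)) ∧
  ∀ x : X, ∀ U : Set X, IsOpen U → x ∈ U → ∃ n, St x (G n) ⊆ U

def IsMooreSpace (X : Type*) [TopologicalSpace X] : Prop :=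
  RegularSpace X ∧ T1Space X ∧ ∃ G : ℕ → Set (Set X), IsDevelopment G

def Metacompact (X : Type*) [TopologicalSpace X] : Prop :=
  ∀ U : Set (Set X), IsOpenCover' U →
    ∃ V, IsOpenCover' V ∧ PointFinite V ∧ Refines V U

theorem stmt5 {X : Type*} [TopologicalSpace X] (h1 : IsMooreSpace X) (h2 : Metacompact X) :
    MonotonicallyMetacompact X := by
  classical
  obtain ⟨-, -, G, hGcov, hGdev⟩ := h1
  choose P hPcov hPpf hPref using fun n => h2 (G n) (hGcov n)
  set H : ℕ → Set (Set X) := fun n =>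
    Nat.rec (P 0) (fun n Hn => Set.image2 (· ∩ ·) (P (n+1)) Hn) n with hHdef
  have hHs : ∀ n, H (n+1) = Set.image2 (· ∩ ·) (P (n+1)) (H n) := fun n => rfl
  have hHcov : ∀ n, IsOpenCover' (H n) := by
    intro n
    induction n with
    | zero => exact hPcov 0
    | succ n ih =>
      constructor
      · intro U hU
        rw [hHs] at hU
        obtain ⟨A, hA, B, hB, rfl⟩ := hU
        exact ((hPcov (n+1)).1 A hA).inter (ih.1 B hB)
      · ext x
        simp only [Set.mem_univ, iff_true, Set.mem_sUnion]
        have hx1 : x ∈ ⋃₀ P (n+1) := by rw [(hPcov (n+1)).2]; trivial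
        have hx2 : x ∈ ⋃₀ H n := by rw [ih.2]; trivial
        obtain ⟨A, hA, hxA⟩ := hx1
        obtain ⟨B, hB, hxB⟩ := hx2
        exact ⟨A ∩ B, by rw [hHs]; exact Set.mem_image2_of_mem hA hB, hxA, hxB⟩
  have hHpf : ∀ n, PointFinite (H n) := by
    intro n
    induction n with
    | zero => exact hPpf 0
    | succ n ih =>
      intro x
      have hsub : {U ∈ H (n+1) | x ∈ U} ⊆
          Set.image2 (· ∩ ·) {A ∈ P (n+1) | x ∈ A} {B ∈ H n | x ∈ B} := by
        rintro U ⟨hU, hxU⟩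
        rw [hHs] at hU
        obtain ⟨A, hA, B, hB, rfl⟩ := hU
        exact Set.mem_image2_of_mem ⟨hA, hxU.1⟩ ⟨hB, hxU.2⟩
      exact (Set.Finite.image2 _ (hPpf (n+1) x) (ih x)).subset hsub
  have hHrefG : ∀ n, Refines (H n) (G n) := by
    intro n
    cases n with
    | zero => exact hPref 0
    | succ n =>
      intro U hU
      rw [hHs] at hU
      obtain ⟨A, hA, B, hB, rfl⟩ := hU
      obtain ⟨W, hW, hAW⟩ := hPref (n+1) A hA
      exact ⟨W, hW, Set.inter_subset_left.trans hAW⟩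
  have hHmono : ∀ N n, N ≤ n → Refines (H n) (H N) := by
    intro N n hNn
    induction hNn with
    | refl => exact fun U hU => ⟨U, hU, subset_rfl⟩
    | @step m h ih =>
      intro U hU
      rw [hHs] at hU
      obtain ⟨A, hA, B, hB, rfl⟩ := hU
      obtain ⟨C, hC, hBC⟩ := ih B hB
      exact ⟨C, hC, Set.inter_subset_right.trans hBC⟩
  have hHdev : ∀ (x : X) (U : Set X), IsOpen U → x ∈ U → ∃ n, St x (H n) ⊆ U := by
    intro x U hU hxU
    obtain ⟨n, hn⟩ := hGdev x U hU hxU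
    refine ⟨n, ?_⟩
    intro y hy
    obtain ⟨S, ⟨hS, hxS⟩, hyS⟩ := hy
    obtain ⟨W, hW, hSW⟩ := hHrefG n S hS
    exact hn ⟨W, ⟨hW, hSW hxS⟩, hSW hyS⟩
  refine ⟨fun U => {S | ∃ n, (S ∈ H n ∧ ∃ W ∈ U, S ⊆ W) ∧
      ∀ k < n, ∀ T ∈ H k, (∃ W ∈ U, T ⊆ W) → ¬ S ⊆ T}, ?_, ?_⟩
  · intro U hU
    refine ⟨⟨?_, ?_⟩, ?_, ?_⟩
    · rintro S ⟨n, ⟨hSn, -⟩, -⟩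
      exact (hHcov n).1 S hSn
    · ext x
      simp only [Set.mem_univ, iff_true, Set.mem_sUnion]
      obtain ⟨W, hW, hxW⟩ : ∃ W ∈ U, x ∈ W := by
        have : x ∈ ⋃₀ U := by rw [hU.2]; trivial
        exact this
      obtain ⟨n, hn⟩ := hHdev x W (hU.1 W hW) hxW
      have hQ : ∃ m, ∃ S, S ∈ H m ∧ x ∈ S ∧ ∃ W' ∈ U, S ⊆ W' := by
        obtain ⟨S, hS, hxS⟩ : ∃ S ∈ H n, x ∈ S := by
          have : x ∈ ⋃₀ H n := by rw [(hHcov n).2]; trivial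
          exact this
        exact ⟨n, S, hS, hxS, W, hW, fun y hy => hn ⟨S, ⟨hS, hxS⟩, hy⟩⟩
      obtain ⟨S, hSm, hxS, hSW⟩ := Nat.find_spec hQ
      refine ⟨S, ⟨Nat.find hQ, ⟨hSm, hSW⟩, ?_⟩, hxS⟩
      intro k hk T hT hTW hST
      exact Nat.find_min hQ hk ⟨T, hT, hST hxS, hTW⟩
    · intro y
      obtain ⟨W₀, hW₀, hyW₀⟩ : ∃ W ∈ U, y ∈ W := by
        have : y ∈ ⋃₀ U := by rw [hU.2]; trivial
        exact this
      obtain ⟨N, hN⟩ := hHdev y W₀ (hU.1 W₀ hW₀) hyW₀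
      have hsub : {S ∈ {S | ∃ n, (S ∈ H n ∧ ∃ W ∈ U, S ⊆ W) ∧
            ∀ k < n, ∀ T ∈ H k, (∃ W ∈ U, T ⊆ W) → ¬ S ⊆ T} | y ∈ S} ⊆
          ⋃ n ∈ Finset.range (N+1), {S ∈ H n | y ∈ S} := by
        rintro S ⟨⟨n, ⟨hSn, hSW⟩, hexcl⟩, hyS⟩
        simp only [Set.mem_iUnion, Finset.mem_range]
        rcases le_or_gt n N with hnN | hNn
        · exact ⟨n, Nat.lt_succ_of_le hnN, hSn, hyS⟩
        · exfalso
          obtain ⟨T, hT, hST⟩ := hHmono N n hNn.le S hSn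
          have hTW : T ⊆ W₀ := fun z hz => hN ⟨T, ⟨hT, hST hyS⟩, hz⟩
          exact hexcl N hNn T hT ⟨W₀, hW₀, hTW⟩ hST
      refine (Set.Finite.biUnion (Finset.range (N+1)).finite_toSet
        (fun n _ => hHpf n y)).subset hsub
    · rintro S ⟨n, ⟨-, hSW⟩, -⟩
      exact hSW
  · rintro U V - - hUV S ⟨n, ⟨hSn, W, hWU, hSW⟩, -⟩
    have hQ : ∃ m, ∃ T, T ∈ H m ∧ (∃ W' ∈ V, T ⊆ W') ∧ S ⊆ T := by
      obtain ⟨W', hW', hWW'⟩ := hUV W hWU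
      exact ⟨n, S, hSn, ⟨W', hW', hSW.trans hWW'⟩, subset_rfl⟩
    obtain ⟨T, hTm, hTW, hST⟩ := Nat.find_spec hQ
    refine ⟨T, ⟨Nat.find hQ, ⟨hTm, hTW⟩, ?_⟩, hST⟩
    intro k hk T' hT' hT'W hTT'
    exact Nat.find_min hQ hk ⟨T', hT', hT'W, hST.trans hTT'⟩
end

section
/- Let κ be a regular uncountable cardinal and consider the ordinal space X = [0, κ) with the order topology. Then X is not monotonically countably metacompact. -/
open Set TopologicalSpace

theorem stmt8 {X : Type*} [LinearOrder X] [TopologicalSpace X] [OrderTopology X]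
    (κ : Cardinal) (hreg : κ.IsRegular) (hunc : Cardinal.aleph0 < κ)
    (e : X ≃o Set.Iio κ.ord) :
    ¬ MonotonicallyCountablyMetacompact X := by
  rintro ⟨r, h1, h2⟩
  set o := κ.ord with ho
  have olim : Order.IsSuccLimit o := Cardinal.isSuccLimit_ord hunc.le
  have opos : (0 : Ordinal) < o := olim.pos
  -- comparison helpers
  have hsymm_lt : ∀ (p q : Set.Iio o), e.symm p < e.symm q ↔ (p : Ordinal) < (q : Ordinal) := by
    intro p q
    rw [(OrderIso.symm e).lt_iff_lt, Subtype.coe_lt_coe]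
  have hsymm_le : ∀ (p q : Set.Iio o), e.symm p ≤ e.symm q ↔ (p : Ordinal) ≤ (q : Ordinal) := by
    intro p q
    rw [(OrderIso.symm e).le_iff_le, Subtype.coe_le_coe]
  -- Iic is open
  have hIic : ∀ b : X, IsOpen (Set.Iic b) := by
    intro b
    have hlt : ((e b : Ordinal)) < o := (e b).2
    have hs : Order.succ (e b : Ordinal) < o := olim.succ_lt hlt
    have heq : Set.Iic b = Set.Iio (e.symm ⟨Order.succ (e b), hs⟩) := by
      ext x
      simp only [Set.mem_Iic, Set.mem_Iio]
      constructor
      · intro hx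
        have h1'' : ((e x : Ordinal)) < Order.succ (e b : Ordinal) :=
          Order.lt_succ_iff.mpr (Subtype.coe_le_coe.mpr (e.le_iff_le.mpr hx))
        have h2'' := (hsymm_lt (e x) ⟨Order.succ (e b), hs⟩).mpr h1''
        rwa [e.symm_apply_apply] at h2''
      · intro hx
        have h2'' : e.symm (e x) < e.symm ⟨Order.succ (e b), hs⟩ := by
          rwa [e.symm_apply_apply]
        have h1'' := (hsymm_lt _ _).mp h2''
        exact e.le_iff_le.mp (Subtype.coe_le_coe.mp (Order.lt_succ_iff.mp h1''))
    rw [heq]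
    exact isOpen_Iio
  -- the two-element covers
  set C : X → Set (Set X) := fun b => {Set.Iic b, Set.Ioi b} with hCdef
  have hCcov : ∀ b, IsOpenCover' (C b) := by
    intro b
    constructor
    · intro U hU
      rcases hU with rfl | rfl
      · exact hIic b
      · exact isOpen_Ioi
    · apply Set.eq_univ_of_forall
      intro x
      rcases le_or_gt x b with h | h
      · exact ⟨Set.Iic b, Or.inl rfl, h⟩
      · exact ⟨Set.Ioi b, Or.inr rfl, h⟩
  have hCct : ∀ b, (C b).Countable := fun b => (Set.toFinite _).countable
  -- choose W b ∈ r (C b) containing b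
  have hWex : ∀ b : X, ∃ Wb, Wb ∈ r (C b) ∧ b ∈ Wb := by
    intro b
    have hcov := (h1 (C b) (hCcov b) (hCct b)).1.2
    have hb : b ∈ ⋃₀ r (C b) := by rw [hcov]; trivial
    obtain ⟨Wb, hm, hbm⟩ := hb
    exact ⟨Wb, hm, hbm⟩
  choose W hWmem hWb using hWex
  -- choose the pressing-down bound
  have haex : ∀ b : X, ∃ a : X, (∃ c, c < b) → a < b ∧ Set.Ioc a b ⊆ W b := by
    intro b
    by_cases h : ∃ c, c < b
    · have hop : IsOpen (W b) := (h1 (C b) (hCcov b) (hCct b)).1.1 _ (hWmem b)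
      obtain ⟨l, hl, hsub⟩ := exists_Ioc_subset_of_mem_nhds (hop.mem_nhds (hWb b)) h
      exact ⟨l, fun _ => ⟨hl, hsub⟩⟩
    · exact ⟨b, fun hc => absurd hc h⟩
  choose a ha using haex
  -- ordinal-valued pressing-down function
  set F : Ordinal → Ordinal := fun y =>
    if h : y < o then (e (a (e.symm ⟨y, h⟩)) : Ordinal) else 0 with hFdef
  have hFpos : ∀ (y : Ordinal) (h : y < o), F y = (e (a (e.symm ⟨y, h⟩)) : Ordinal) :=
    fun y h => dif_pos h
  have hF : ∀ (y : Ordinal) (h : y < o), 0 < y →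
      F y < y ∧ Set.Ioc (a (e.symm ⟨y, h⟩)) (e.symm ⟨y, h⟩) ⊆ W (e.symm ⟨y, h⟩) := by
    intro y h h0
    have hc : ∃ c, c < e.symm ⟨y, h⟩ := ⟨e.symm ⟨0, opos⟩, (hsymm_lt _ _).mpr h0⟩
    obtain ⟨h1', h2'⟩ := ha _ hc
    refine ⟨?_, h2'⟩
    rw [hFpos y h]
    have hlt : e (a (e.symm ⟨y, h⟩)) < e (e.symm ⟨y, h⟩) := e.lt_iff_lt.mpr h1'
    rw [e.apply_symm_apply] at hlt
    exact Subtype.coe_lt_coe.mpr hlt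
  -- key claim: some γ works for unboundedly many y
  have claim : ∃ γ, γ < o ∧ ∀ z, z < o → ∃ y, z < y ∧ y < o ∧ 0 < y ∧ F y ≤ γ := by
    by_contra hcon
    push_neg at hcon
    choose z hz1 hz2 using hcon
    set g : Set.Iio o → Set.Iio o := fun p =>
      ⟨Order.succ (max (z p.1 p.2) p.1),
        Set.mem_Iio.mpr (olim.succ_lt (max_lt (hz1 p.1 p.2) p.2))⟩ with hgdef
    set seq : ℕ → Set.Iio o := fun n => g^[n] ⟨0, opos⟩ with hseqdef
    have hseq : ∀ n, (seq (n + 1) : Ordinal)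
        = Order.succ (max (z (seq n).1 (seq n).2) (seq n).1) := by
      intro n
      have hit : seq (n + 1) = g (seq n) := Function.iterate_succ_apply' g n _
      rw [hit]
    have hmono : ∀ n, (seq n : Ordinal) < (seq (n + 1) : Ordinal) := by
      intro n
      rw [hseq n]
      exact (le_max_right _ _).trans_lt (Order.lt_succ _)
    have hsup_lt : iSup (fun n => (seq n : Ordinal)) < o := by
      apply Ordinal.iSup_lt_ord_lift ?_ (fun n => (seq n).2)
      rw [Cardinal.mk_nat, Cardinal.lift_aleph0, ho, hreg.cof_eq]
      exact hunc
    have hlub : ∀ n, (seq n : Ordinal) < iSup (fun n => (seq n : Ordinal)) := by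
      intro n
      exact lt_of_lt_of_le (hmono n) (Ordinal.le_iSup (fun n => (seq n : Ordinal)) (n + 1))
    have h0β : (0 : Ordinal) < iSup (fun n => (seq n : Ordinal)) := hlub 0
    have hFβ := (hF _ hsup_lt h0β).1
    obtain ⟨n, hn⟩ := Ordinal.lt_iSup_iff.mp hFβ
    have hzβ : z (seq n).1 (seq n).2 < iSup (fun n => (seq n : Ordinal)) := by
      calc z (seq n).1 (seq n).2
          ≤ Order.succ (max (z (seq n).1 (seq n).2) (seq n).1) :=
            (le_max_left _ _).trans (Order.lt_succ _).le
        _ = (seq (n + 1) : Ordinal) := (hseq n).symm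
        _ < _ := hlub (n + 1)
    have hgt := hz2 (seq n).1 (seq n).2 _ hzβ hsup_lt h0β
    exact absurd hgt (not_lt.mpr hn.le)
  obtain ⟨γ, hγo, hkey⟩ := claim
  choose nxt hnxt1 hnxt2 hnxt3 hnxt4 using hkey
  -- increasing sequence above γ on which F ≤ γ
  set T := {y : Ordinal // y < o ∧ γ < y ∧ F y ≤ γ} with hTdef
  set bs : ℕ → T := fun n => Nat.rec
      (⟨nxt γ hγo, hnxt2 _ _, hnxt1 _ _, hnxt4 _ _⟩ : T)
      (fun _ p => (⟨nxt p.1 p.2.1, hnxt2 _ _, lt_trans p.2.2.1 (hnxt1 _ _), hnxt4 _ _⟩ : T)) n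
    with hbsdef
  have hbs : ∀ n : ℕ, ((bs n : T) : Ordinal) < ((bs (n + 1) : T) : Ordinal) := fun n =>
    hnxt1 (bs n).1 (bs n).2.1
  have hbsmono : StrictMono (fun n => ((bs n : T) : Ordinal)) := strictMono_nat_of_lt_succ hbs
  -- back to X
  set bm : ℕ → X := fun m => e.symm ⟨(bs m).1, (bs m).2.1⟩ with hbmdef
  set bγ : X := e.symm ⟨γ, hγo⟩ with hbγdef
  set x : X := e.symm ⟨Order.succ γ, olim.succ_lt hγo⟩ with hxdef
  set Ustar : Set (Set X) := ⋃ m, C (bm m) with hUdef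
  have hUoc : IsOpenCover' Ustar := by
    constructor
    · intro U hU
      obtain ⟨m, hm⟩ := Set.mem_iUnion.mp hU
      exact (hCcov (bm m)).1 U hm
    · apply Set.univ_subset_iff.mp
      rw [← (hCcov (bm 0)).2]
      exact Set.sUnion_subset_sUnion (Set.subset_iUnion (fun m => C (bm m)) 0)
  have hUct : Ustar.Countable := Set.countable_iUnion fun m => (hCct (bm m))
  have href : ∀ m, Refines (r (C (bm m))) (r Ustar) := by
    intro m
    refine h2 _ _ (hCcov _) hUoc (hCct _) hUct ?_
    intro U hU
    exact ⟨U, Set.mem_iUnion.mpr ⟨m, hU⟩, subset_rfl⟩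
  have hW'ex : ∀ m, ∃ W', W' ∈ r Ustar ∧ W (bm m) ⊆ W' := by
    intro m
    obtain ⟨V, hV, hsub⟩ := href m (W (bm m)) (hWmem _)
    exact ⟨V, hV, hsub⟩
  choose W' hW'mem hW'sub using hW'ex
  -- the Ioc's sit inside the W's
  have hIocW : ∀ m, Set.Ioc bγ (bm m) ⊆ W (bm m) := by
    intro m
    have h0 : (0 : Ordinal) < (bs m).1 := (zero_le (a := γ)).trans_lt (bs m).2.2.1
    have h2' := (hF (bs m).1 (bs m).2.1 h0).2
    have hFle : F (bs m).1 ≤ γ := (bs m).2.2.2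
    rw [hFpos (bs m).1 (bs m).2.1] at hFle
    have hale : a (bm m) ≤ bγ := by
      rw [hbγdef, OrderIso.le_symm_apply]
      exact Subtype.coe_le_coe.mp hFle
    exact (Set.Ioc_subset_Ioc_left hale).trans h2'
  have hbγx : bγ < x := (hsymm_lt _ _).mpr (Order.lt_succ γ)
  have hbγbm : ∀ m, bγ < bm m := fun m => (hsymm_lt _ _).mpr (bs m).2.2.1
  have hxbm : ∀ m, x ≤ bm m := fun m => (hsymm_le _ _).mpr (Order.succ_le_iff.mpr (bs m).2.2.1)
  have hxW' : ∀ m, x ∈ W' m := fun m => hW'sub m (hIocW m ⟨hbγx, hxbm m⟩)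
  -- pigeonhole
  have hpf : {U | U ∈ r Ustar ∧ x ∈ U}.Finite := (h1 Ustar hUoc hUct).2.1 x
  haveI := hpf.to_subtype
  set f : ℕ → {U | U ∈ r Ustar ∧ x ∈ U} := fun m => ⟨W' m, hW'mem m, hxW' m⟩ with hfdef
  obtain ⟨Ws, hWs⟩ := Finite.exists_infinite_fiber f
  have hMinf : (f ⁻¹' {Ws} : Set ℕ).Infinite := Set.infinite_coe_iff.mp hWs
  have hMval : ∀ m ∈ (f ⁻¹' {Ws} : Set ℕ), W' m = (Ws : Set X) := by
    intro m hm
    have hfm : f m = Ws := hm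
    exact congrArg Subtype.val hfm
  obtain ⟨U, hUmem, hUsub⟩ := (h1 Ustar hUoc hUct).2.2 (Ws : Set X) Ws.2.1
  obtain ⟨n, hUn⟩ := Set.mem_iUnion.mp hUmem
  rcases hUn with rfl | rfl
  · -- case U = Iic (bm n)
    obtain ⟨m, hmM, hnm⟩ := hMinf.exists_gt n
    have hbmW : bm m ∈ (Ws : Set X) := by
      rw [← hMval m hmM]
      exact hW'sub m (hIocW m ⟨hbγbm m, le_rfl⟩)
    have hle : bm m ≤ bm n := hUsub hbmW
    have hlt : bm n < bm m := (hsymm_lt _ _).mpr (hbsmono hnm)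
    exact absurd hle (not_le.mpr hlt)
  · -- case U = Ioi (bm n)
    obtain ⟨m, hmM⟩ := hMinf.nonempty
    have hxWs : x ∈ (Ws : Set X) := by
      rw [← hMval m hmM]
      exact hxW' m
    have hlt : bm n < x := hUsub hxWs
    have hlt' : ((bs n : T) : Ordinal) < Order.succ γ := (hsymm_lt _ _).mp hlt
    exact absurd (bs n).2.2.1 (not_lt.mpr (Order.lt_succ_iff.mp hlt'))
end

section
/- Let X be the subspace of the ordinal space [0, ω₁] consisting of ω₁ together with all non-limit ordinals below ω₁. Then X is monotonically metacompact but not metrizable. -/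
open Set TopologicalSpace

open Set TopologicalSpace Ordinal

namespace Stmt13Aux

noncomputable section

def Xs : Set Ordinal :=
  {α : Ordinal | (α < (Cardinal.aleph 1).ord ∧ ¬ Order.IsSuccLimit α) ∨ α = (Cardinal.aleph 1).ord}

lemma w1_isLimit : Order.IsSuccLimit ((Cardinal.aleph 1).ord) :=
  Cardinal.isSuccLimit_ord (Cardinal.aleph0_le_aleph 1)

def tp : Xs := ⟨(Cardinal.aleph 1).ord, Or.inr rfl⟩

lemma le_w1 (x : Xs) : x.1 ≤ (Cardinal.aleph 1).ord := x.2.elim (fun h => h.1.le) le_of_eq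

def T (γ : Ordinal) : Set Xs := Subtype.val ⁻¹' Ioi γ

lemma mem_T {γ : Ordinal} {x : Xs} : x ∈ T γ ↔ γ < x.1 := Iff.rfl

lemma isOpen_T (γ : Ordinal) : IsOpen (T γ) := isOpen_Ioi.preimage continuous_subtype_val

lemma T_anti {γ δ : Ordinal} (h : δ ≤ γ) : T γ ⊆ T δ := fun _ hx => lt_of_le_of_lt h hx

lemma tail_subset_of_mem_nhds {s : Set Xs} (hs : s ∈ nhds tp) :
    ∃ γ < (Cardinal.aleph 1).ord, T γ ⊆ s := by
  rw [mem_nhds_subtype] at hs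
  obtain ⟨t, ht, hts⟩ := hs
  obtain ⟨γ, hγ, hIoc⟩ := exists_Ioc_subset_of_mem_nhds' ht w1_isLimit.pos
  refine ⟨γ, hγ.2, fun x hx => hts ?_⟩
  exact hIoc ⟨hx, le_w1 x⟩

lemma isOpen_singleton {x : Xs} (hx : x ≠ tp) : IsOpen ({x} : Set Xs) := by
  have hv : x.1 < (Cardinal.aleph 1).ord ∧ ¬ Order.IsSuccLimit x.1 :=
    x.2.resolve_right (fun h => hx (Subtype.ext h))
  rcases Ordinal.zero_or_succ_or_isSuccLimit x.1 with h0 | ⟨b, hb⟩ | hl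
  · have he : ({x} : Set Xs) = Subtype.val ⁻¹' Iio 1 := by
      ext y
      constructor
      · rintro rfl
        simpa [mem_preimage, h0] using zero_lt_one
      · intro hy
        have : y.1 = 0 := Ordinal.lt_one_iff_zero.mp hy
        exact Subtype.ext (this.trans h0.symm)
    exact he ▸ isOpen_Iio.preimage continuous_subtype_val
  · have he : ({x} : Set Xs) = Subtype.val ⁻¹' Ioo b (Order.succ (Order.succ b)) := by
      ext y
      constructor
      · rintro rfl
        exact ⟨hb ▸ Order.lt_succ b, hb ▸ Order.succ_lt_succ (Order.lt_succ b)⟩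
      · rintro ⟨h1, h2⟩
        have hle : y.1 ≤ Order.succ b := Order.lt_succ_iff.mp h2
        have hge : Order.succ b ≤ y.1 := Order.succ_le_of_lt h1
        exact Subtype.ext ((le_antisymm hle hge).trans hb)
    exact he ▸ (isOpen_Ioo).preimage continuous_subtype_val
  · exact absurd hl hv.2

def S (U : Set (Set Xs)) : Set Ordinal :=
  {γ | γ < (Cardinal.aleph 1).ord ∧ ∃ W ∈ U, T γ ⊆ W}

def r (U : Set (Set Xs)) : Set (Set Xs) :=
  {s | ∃ x : Xs, x ≠ tp ∧ s = {x}} ∪ {T (sInf (S U))}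

lemma S_nonempty {U : Set (Set Xs)} (hU : IsOpenCover' U) : (S U).Nonempty := by
  have htp : (tp : Xs) ∈ ⋃₀ U := hU.2 ▸ mem_univ tp
  obtain ⟨W, hWU, hW⟩ := htp
  have hmem : W ∈ nhds tp := (hU.1 W hWU).mem_nhds hW
  obtain ⟨γ, hγ, hT⟩ := tail_subset_of_mem_nhds hmem
  exact ⟨γ, hγ, W, hWU, hT⟩

lemma sInf_S_mem {U : Set (Set Xs)} (hU : IsOpenCover' U) : sInf (S U) ∈ S U :=
  csInf_mem (S_nonempty hU)

lemma S_bddAbove (U : Set (Set Xs)) : BddAbove (S U) :=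
  ⟨(Cardinal.aleph 1).ord, fun _ h => h.1.le⟩

lemma r_spec {U : Set (Set Xs)} (hU : IsOpenCover' U) :
    IsOpenCover' (r U) ∧ PointFinite (r U) ∧ Refines (r U) U := by
  have hmem := sInf_S_mem hU
  refine ⟨⟨?_, ?_⟩, ?_, ?_⟩
  · rintro s (⟨x, hx, rfl⟩ | hs)
    · exact isOpen_singleton hx
    · exact hs ▸ isOpen_T _
  · apply eq_univ_iff_forall.mpr
    intro x
    by_cases hx : x = tp
    · exact ⟨T (sInf (S U)), Or.inr rfl, hx ▸ hmem.1⟩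
    · exact ⟨{x}, Or.inl ⟨x, hx, rfl⟩, rfl⟩
  · intro x
    apply Set.Finite.subset (Set.Finite.insert ({x} : Set Xs) (finite_singleton (T (sInf (S U)))))
    rintro s ⟨(⟨y, hy, rfl⟩ | hs), hxs⟩
    · left
      rw [show x = y from hxs]
    · exact Or.inr hs
  · rintro s (⟨x, hx, rfl⟩ | hs)
    · have : x ∈ ⋃₀ U := hU.2 ▸ mem_univ x
      obtain ⟨W, hWU, hW⟩ := this
      exact ⟨W, hWU, singleton_subset_iff.mpr hW⟩
    · obtain ⟨W, hWU, hTW⟩ := hmem.2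
      exact ⟨W, hWU, hs ▸ hTW⟩

lemma r_mono {U V : Set (Set Xs)} (hU : IsOpenCover' U) (hV : IsOpenCover' V)
    (h : Refines U V) : Refines (r U) (r V) := by
  rintro s (⟨x, hx, rfl⟩ | hs)
  · exact ⟨{x}, Or.inl ⟨x, hx, rfl⟩, subset_rfl⟩
  · refine ⟨T (sInf (S V)), Or.inr rfl, hs ▸ T_anti ?_⟩
    apply csInf_le_csInf (OrderBot.bddBelow _) (S_nonempty hU)
    rintro γ ⟨hγ, W, hWU, hTW⟩
    obtain ⟨W', hW'V, hWW'⟩ := h W hWU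
    exact ⟨hγ, W', hW'V, hTW.trans hWW'⟩

set_option synthInstance.maxHeartbeats 1000000 in
lemma not_metrizable : ¬ MetrizableSpace Xs := by
  intro hm
  letI : PseudoMetricSpace Xs := TopologicalSpace.pseudoMetrizableSpacePseudoMetric Xs
  haveI : FirstCountableTopology Xs := inferInstance
  obtain ⟨B, hB⟩ := (nhds tp).exists_antitone_basis
  have hBn : ∀ n, B n ∈ nhds tp := fun n => hB.toHasBasis.mem_of_mem trivial
  choose γ hγlt hγT using fun n => tail_subset_of_mem_nhds (hBn n)
  set γs : Ordinal := ⨆ n, Order.succ (γ n) with hγs_def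
  have hsucc_lt : ∀ n, Order.succ (γ n) < (Cardinal.aleph 1).ord :=
    fun n => w1_isLimit.succ_lt (hγlt n)
  have hγs : γs < (Cardinal.aleph 1).ord := by
    apply Ordinal.iSup_lt_ord_lift _ hsucc_lt
    rw [Cardinal.isRegular_aleph_one.cof_eq, Cardinal.mk_nat, Cardinal.lift_aleph0]
    exact Cardinal.aleph0_lt_aleph_one
  have hTmem : T γs ∈ nhds tp := (isOpen_T γs).mem_nhds hγs
  obtain ⟨n, -, hn⟩ := hB.toHasBasis.mem_iff.mp hTmem
  have hx : Order.succ (γ n) ∈ Xs :=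
    Or.inl ⟨hsucc_lt n, Order.not_isSuccLimit_succ _⟩
  have hxT : (⟨Order.succ (γ n), hx⟩ : Xs) ∈ T (γ n) := Order.lt_succ (γ n)
  have : γs < Order.succ (γ n) := hn (hγT n hxT)
  exact absurd (le_ciSup (Ordinal.bddAbove_range _) n) (not_le.mpr this)

end

end Stmt13Aux

theorem stmt13 :
    MonotonicallyMetacompact
      ↥{α : Ordinal | (α < (Cardinal.aleph 1).ord ∧ ¬ Order.IsSuccLimit α) ∨ α = (Cardinal.aleph 1).ord} ∧
    ¬ MetrizableSpace
      ↥{α : Ordinal | (α < (Cardinal.aleph 1).ord ∧ ¬ Order.IsSuccLimit α) ∨ α = (Cardinal.aleph 1).ord} := by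
  constructor
  · exact ⟨Stmt13Aux.r, fun U hU => Stmt13Aux.r_spec hU,
      fun U V hU hV h => Stmt13Aux.r_mono hU hV h⟩
  · exact Stmt13Aux.not_metrizable
end
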